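/- Let δ ∈ (0,1) and c < p. Suppose V : ℝ → ℝ satisfies, for all x in some left neighborhood (1−η, 1] of 1 (with η > 0), the recursion V(x) = (x·p + (1−x)·q − c) + δ·(x·p + (1−x)·q)·V(L(x)) + δ·(x·(1−p) + (1−x)·(1−q))·V(D(x)), where L(1) = D(1) = 1. If V is differentiable at 1 from within [0,1], then V(1) = (p − c)/(1 − δ) and the (one-sided) derivative of V at 1 equals (p − q)/(1 − δ). -/

import Mathlib

/-- The like-update of the prior `x` (its formula extends continuously to `x = 1`
with value `1`). -/
noncomputable def likeUpdate (p q x : ℝ) : ℝ := x * p / (x * p + (1 - x) * q)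

/-- The dislike-update of the prior `x` (its formula extends continuously to `x = 1`
with value `1`). -/
noncomputable def dislikeUpdate (p q x : ℝ) : ℝ :=
  x * (1 - p) / (x * (1 - p) + (1 - x) * (1 - q))

/-- If `V` satisfies the dynamic-pricing recursion on a left neighborhood `(1−η, 1]`
of `1` and is differentiable at `1` from within `[0,1]`, then `V(1) = (p−c)/(1−δ)` and
the one-sided derivative of `V` at `1` equals `(p−q)/(1−δ)`. -/
theorem value_and_deriv_at_one (p q c δ : ℝ) (hq0 : 0 < q) (hqp : q < p) (hp1 : p < 1)
    (hqc : q < c) (hcp : c < p) (hδ0 : 0 < δ) (hδ1 : δ < 1)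
    (V : ℝ → ℝ) (η : ℝ) (hη : 0 < η)
    (hrec : ∀ x ∈ Set.Ioc (1 - η) 1,
      V x = (x * p + (1 - x) * q - c)
        + δ * (x * p + (1 - x) * q) * V (likeUpdate p q x)
        + δ * (x * (1 - p) + (1 - x) * (1 - q)) * V (dislikeUpdate p q x))
    (hdiff : DifferentiableWithinAt ℝ V (Set.Icc 0 1) 1) :
    V 1 = (p - c) / (1 - δ) ∧
      derivWithin V (Set.Icc 0 1) 1 = (p - q) / (1 - δ) := by
  have hp0 : 0 < p := hq0.trans hqp
  have hq1 : q < 1 := hqp.trans hp1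
  have hδne : (1 : ℝ) - δ ≠ 0 := by linarith
  have hpne : p ≠ 0 := ne_of_gt hp0
  have hpne1 : (1 : ℝ) - p ≠ 0 := by linarith
  have hL1 : likeUpdate p q 1 = 1 := by
    simp [likeUpdate, hpne]
  have hD1 : dislikeUpdate p q 1 = 1 := by
    simp [dislikeUpdate, hpne1]
  have h1mem : (1 : ℝ) ∈ Set.Ioc (1 - η) 1 := ⟨by linarith, le_refl 1⟩
  have hrec1 := hrec 1 h1mem
  rw [hL1, hD1] at hrec1
  have hV1 : V 1 = (p - c) / (1 - δ) := by
    field_simp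
    nlinarith [hrec1]
  refine ⟨hV1, ?_⟩
  set S := Set.Icc (0:ℝ) 1 with hS
  set v := derivWithin V S 1 with hv
  have hVd : HasDerivWithinAt V v S 1 := hdiff.hasDerivWithinAt
  -- derivatives of the update maps at 1
  have hgL : HasDerivAt (fun x : ℝ => x * p + (1 - x) * q) (p - q) 1 := by
    have h1 : HasDerivAt (fun x : ℝ => x * p) p 1 := by
      simpa using (hasDerivAt_id (1:ℝ)).mul_const p
    have h2 : HasDerivAt (fun x : ℝ => (1 - x) * q) (-q) 1 := by
      have := ((hasDerivAt_const (1:ℝ) (1:ℝ)).sub (hasDerivAt_id (1:ℝ))).mul_const q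
      simpa using this
    exact (h1.add h2).congr_deriv (by ring)
  have hgD : HasDerivAt (fun x : ℝ => x * (1 - p) + (1 - x) * (1 - q)) ((1-p) - (1-q)) 1 := by
    have h1 : HasDerivAt (fun x : ℝ => x * (1 - p)) (1 - p) 1 := by
      simpa using (hasDerivAt_id (1:ℝ)).mul_const (1 - p)
    have h2 : HasDerivAt (fun x : ℝ => (1 - x) * (1 - q)) (-(1 - q)) 1 := by
      have := ((hasDerivAt_const (1:ℝ) (1:ℝ)).sub (hasDerivAt_id (1:ℝ))).mul_const (1 - q)
      simpa using this
    have := h1.add h2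
    exact this.congr_deriv (by ring)
  have hgL1 : (1:ℝ) * p + (1 - 1) * q = p := by ring
  have hgD1 : (1:ℝ) * (1 - p) + (1 - 1) * (1 - q) = 1 - p := by ring
  have hLd : HasDerivAt (likeUpdate p q) (q / p) 1 := by
    have hnum : HasDerivAt (fun x : ℝ => x * p) p 1 := by
      simpa using (hasDerivAt_id (1:ℝ)).mul_const p
    have hne : (1:ℝ) * p + (1 - 1) * q ≠ 0 := by rw [hgL1]; exact hpne
    have := hnum.div hgL hne
    refine this.congr_deriv ?_
    field_simp
    ring
  have hDd : HasDerivAt (dislikeUpdate p q) ((1 - q) / (1 - p)) 1 := by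
    have hnum : HasDerivAt (fun x : ℝ => x * (1 - p)) (1 - p) 1 := by
      simpa using (hasDerivAt_id (1:ℝ)).mul_const (1 - p)
    have hne : (1:ℝ) * (1 - p) + (1 - 1) * (1 - q) ≠ 0 := by rw [hgD1]; exact hpne1
    have := hnum.div hgD hne
    refine this.congr_deriv ?_
    rw [hgD1]
    field_simp
    ring
  -- the update maps send [0,1] into [0,1]
  have hmapsL : Set.MapsTo (likeUpdate p q) S S := by
    intro x hx
    obtain ⟨hx0, hx1⟩ := hx
    unfold likeUpdate
    have hden : 0 < x * p + (1 - x) * q := by nlinarith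
    constructor
    · exact div_nonneg (by nlinarith) hden.le
    · rw [div_le_one hden]; nlinarith
  have hmapsD : Set.MapsTo (dislikeUpdate p q) S S := by
    intro x hx
    obtain ⟨hx0, hx1⟩ := hx
    unfold dislikeUpdate
    have hden : 0 < x * (1 - p) + (1 - x) * (1 - q) := by nlinarith
    constructor
    · exact div_nonneg (by nlinarith) hden.le
    · rw [div_le_one hden]; nlinarith
  -- compositions
  have hVdL : HasDerivWithinAt V v S (likeUpdate p q 1) := by rw [hL1]; exact hVd
  have hVdD : HasDerivWithinAt V v S (dislikeUpdate p q 1) := by rw [hD1]; exact hVd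
  have hVL : HasDerivWithinAt (fun x => V (likeUpdate p q x)) (v * (q / p)) S 1 :=
    HasDerivWithinAt.comp 1 hVdL (hLd.hasDerivWithinAt) hmapsL
  have hVD : HasDerivWithinAt (fun x => V (dislikeUpdate p q x)) (v * ((1 - q) / (1 - p))) S 1 :=
    HasDerivWithinAt.comp 1 hVdD (hDd.hasDerivWithinAt) hmapsD
  -- derivative of the right-hand side of the recursion
  have hA : HasDerivWithinAt (fun x =>
      (x * p + (1 - x) * q - c)
        + δ * (x * p + (1 - x) * q) * V (likeUpdate p q x)
        + δ * (x * (1 - p) + (1 - x) * (1 - q)) * V (dislikeUpdate p q x))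
      ((p - q) + δ * v) S 1 := by
    have h1 : HasDerivWithinAt (fun x : ℝ => x * p + (1 - x) * q - c) (p - q) S 1 :=
      (hgL.hasDerivWithinAt).sub_const c
    have h2 : HasDerivWithinAt (fun x : ℝ => δ * (x * p + (1 - x) * q)) (δ * (p - q)) S 1 :=
      (hgL.hasDerivWithinAt).const_mul δ
    have h3 : HasDerivWithinAt (fun x : ℝ => δ * (x * (1 - p) + (1 - x) * (1 - q)))
        (δ * ((1 - p) - (1 - q))) S 1 := (hgD.hasDerivWithinAt).const_mul δ
    have hT2 := h2.mul hVL
    have hT3 := h3.mul hVD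
    have := (h1.add hT2).add hT3
    refine this.congr_deriv ?_
    rw [hL1, hD1, hgL1, hgD1]
    field_simp
    ring
  -- V agrees with the recursion on a neighborhood of 1 within S
  have hev : V =ᶠ[nhdsWithin 1 S] (fun x =>
      (x * p + (1 - x) * q - c)
        + δ * (x * p + (1 - x) * q) * V (likeUpdate p q x)
        + δ * (x * (1 - p) + (1 - x) * (1 - q)) * V (dislikeUpdate p q x)) := by
    have hmem : Set.Ioc (1 - η) 1 ∈ nhdsWithin 1 S := by
      apply mem_nhdsWithin.2
      refine ⟨Set.Ioi (1 - η), isOpen_Ioi, by simpa using by linarith, ?_⟩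
      intro x hx
      exact ⟨hx.1, hx.2.2⟩
    filter_upwards [hmem] with x hx using hrec x hx
  have heq1 : V 1 = (1 * p + (1 - 1) * q - c)
        + δ * (1 * p + (1 - 1) * q) * V (likeUpdate p q 1)
        + δ * (1 * (1 - p) + (1 - 1) * (1 - q)) * V (dislikeUpdate p q 1) := hrec 1 h1mem
  have hkey : HasDerivWithinAt V ((p - q) + δ * v) S 1 :=
    hA.congr_of_eventuallyEq hev heq1
  have huniq : UniqueDiffWithinAt ℝ S 1 :=
    (uniqueDiffOn_Icc one_pos) 1 ⟨zero_le_one, le_refl 1⟩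
  have hveq : v = (p - q) + δ * v := hkey.derivWithin huniq
  have hfin : v * (1 - δ) = p - q := by linarith [hveq]
  show v = (p - q) / (1 - δ)
  field_simp
  linarith [hfin]
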